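/- Let f : A → A′ and g : B → B′ be L-homomorphisms of join-semilattices with zero, and define h on bi-ideals by h(I) = ∇_{A′,B′} ∪ { ⟨u,v⟩ : ∃ ⟨x,y⟩ ∈ I, u ≤ f(x), v ≤ g(y) }. Then h is a lattice homomorphism from the lattice of bi-ideals of A × B to the lattice of bi-ideals of A′ × B′, i.e., h(I ∨ J) = h(I) ∨ h(J) and h(I ∩ J) = h(I) ∩ h(J). -/
import Mathlib


variable {A B : Type*} [SemilatticeSup A] [OrderBot A] [SemilatticeSup B] [OrderBot B]

/-- A bi-ideal of `A × B`: a downward closed subset containing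
`∇ = (A × {0}) ∪ ({0} × B)` that is closed under lateral joins. -/
def IsBiIdeal (I : Set (A × B)) : Prop :=
  (∀ ⦃p q : A × B⦄, q ≤ p → p ∈ I → q ∈ I) ∧
  (∀ a : A, (a, (⊥ : B)) ∈ I) ∧
  (∀ b : B, ((⊥ : A), b) ∈ I) ∧
  (∀ a₀ a₁ : A, ∀ b : B, (a₀, b) ∈ I → (a₁, b) ∈ I → (a₀ ⊔ a₁, b) ∈ I) ∧
  (∀ a : A, ∀ b₀ b₁ : B, (a, b₀) ∈ I → (a, b₁) ∈ I → (a, b₀ ⊔ b₁) ∈ I)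

/-- `∇ = (A × {0}) ∪ ({0} × B)`, the least bi-ideal. -/
def nabla (A B : Type*) [SemilatticeSup A] [OrderBot A] [SemilatticeSup B] [OrderBot B] :
    Set (A × B) := {p | p.1 = ⊥ ∨ p.2 = ⊥}

/-- The pure tensor `a ⊗ b`. -/
def pureTensor (a : A) (b : B) : Set (A × B) :=
  nabla A B ∪ {p | p.1 ≤ a ∧ p.2 ≤ b}

/-- The bi-ideal generated by a subset `X` of `A × B`. -/
def biGen (X : Set (A × B)) : Set (A × B) := ⋂₀ {K | IsBiIdeal K ∧ X ⊆ K}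

/-- The join of two bi-ideals in the lattice of bi-ideals. -/
def biSup (I J : Set (A × B)) : Set (A × B) := biGen (I ∪ J)

/-- Elements of the tensor product `A ⊗ B`: the compact (finitely generated) bi-ideals. -/
def IsTensorElt (I : Set (A × B)) : Prop := ∃ S : Finset (A × B), I = biGen ↑S

/-- An L-homomorphism of join-semilattices with zero. -/
def IsLHom {A B : Type*} [SemilatticeSup A] [OrderBot A] [SemilatticeSup B] [OrderBot B]
    (f : A → B) : Prop :=
  f ⊥ = ⊥ ∧ (∀ a₀ a₁ : A, f (a₀ ⊔ a₁) = f a₀ ⊔ f a₁) ∧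
  (∀ a₀ a₁ : A, ∀ b : B, b ≤ f a₀ → b ≤ f a₁ → ∃ x : A, x ≤ a₀ ∧ x ≤ a₁ ∧ b ≤ f x)

/-- The image map on bi-ideals induced by `f` and `g`:
`h(I) = ∇ ∪ { ⟨u,v⟩ : ∃ ⟨x,y⟩ ∈ I, u ≤ f x, v ≤ g y }`. -/
def hmap {A A' B B' : Type*} [SemilatticeSup A] [OrderBot A] [SemilatticeSup A']
    [OrderBot A'] [SemilatticeSup B] [OrderBot B] [SemilatticeSup B'] [OrderBot B']
    (f : A → A') (g : B → B') (I : Set (A × B)) : Set (A' × B') :=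
  nabla A' B' ∪ {p | ∃ q ∈ I, p.1 ≤ f q.1 ∧ p.2 ≤ g q.2}

lemma lhom_mono {A B : Type*} [SemilatticeSup A] [OrderBot A] [SemilatticeSup B] [OrderBot B]
    {f : A → B} (hf : IsLHom f) : Monotone f := by
  intro a b hab
  have h : f b = f a ⊔ f b := by rw [← hf.2.1, sup_eq_right.mpr hab]
  exact h ▸ le_sup_left

lemma biGen_isBiIdeal (X : Set (A × B)) : IsBiIdeal (biGen X) := by
  refine ⟨?_, ?_, ?_, ?_, ?_⟩
  · intro p q hqp hp K hK
    exact hK.1.1 hqp (hp K hK)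
  · intro a K hK; exact hK.1.2.1 a
  · intro b K hK; exact hK.1.2.2.1 b
  · intro a₀ a₁ b h0 h1 K hK; exact hK.1.2.2.2.1 a₀ a₁ b (h0 K hK) (h1 K hK)
  · intro a b₀ b₁ h0 h1 K hK; exact hK.1.2.2.2.2 a b₀ b₁ (h0 K hK) (h1 K hK)

lemma subset_biGen (X : Set (A × B)) : X ⊆ biGen X :=
  fun _ hp => fun _ hK => hK.2 hp

lemma biGen_subset {X K : Set (A × B)} (hK : IsBiIdeal K) (hXK : X ⊆ K) : biGen X ⊆ K :=
  Set.sInter_subset_of_mem ⟨hK, hXK⟩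

lemma hmap_mono {A A' B B' : Type*} [SemilatticeSup A] [OrderBot A] [SemilatticeSup A']
    [OrderBot A'] [SemilatticeSup B] [OrderBot B] [SemilatticeSup B'] [OrderBot B']
    (f : A → A') (g : B → B') {I J : Set (A × B)} (h : I ⊆ J) :
    hmap f g I ⊆ hmap f g J := by
  rintro p (hp | ⟨q, hq, h1, h2⟩)
  · exact Or.inl hp
  · exact Or.inr ⟨q, h hq, h1, h2⟩

lemma hmap_isBiIdeal {A A' B B' : Type*} [SemilatticeSup A] [OrderBot A] [SemilatticeSup A']
    [OrderBot A'] [SemilatticeSup B] [OrderBot B] [SemilatticeSup B'] [OrderBot B']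
    {f : A → A'} {g : B → B'} (hf : IsLHom f) (hg : IsLHom g) {K : Set (A × B)}
    (hK : IsBiIdeal K) : IsBiIdeal (hmap f g K) := by
  refine ⟨?_, fun a => Or.inl (Or.inr rfl), fun b => Or.inl (Or.inl rfl), ?_, ?_⟩
  · rintro p q hqp (hp | ⟨r, hr, h1, h2⟩)
    · left
      rcases hp with h | h
      · exact Or.inl (le_bot_iff.mp (h ▸ hqp.1))
      · exact Or.inr (le_bot_iff.mp (h ▸ hqp.2))
    · exact Or.inr ⟨r, hr, hqp.1.trans h1, hqp.2.trans h2⟩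
  · rintro a₀ a₁ b (h0 | ⟨⟨x₀, y₀⟩, hq0, h01, h02⟩) h1
    · rcases h0 with h0 | h0
      · subst h0
        rcases h1 with (h1 | h1) | ⟨q, hq, h11, h12⟩
        · have h1' : a₁ = ⊥ := h1
          exact Or.inl (Or.inl (by simp [h1']))
        · exact Or.inl (Or.inr h1)
        · exact Or.inr ⟨q, hq, by simpa using h11, h12⟩
      · exact Or.inl (Or.inr h0)
    · rcases h1 with (h1 | h1) | ⟨⟨x₁, y₁⟩, hq1, h11, h12⟩
      · subst h1
        exact Or.inr ⟨(x₀, y₀), hq0, by simpa using h01, h02⟩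
      · exact Or.inl (Or.inr h1)
      · -- both witnesses
        obtain ⟨y, hy0, hy1, hby⟩ := hg.2.2 y₀ y₁ b h02 h12
        refine Or.inr ⟨(x₀ ⊔ x₁, y), ?_, ?_, hby⟩
        · exact hK.2.2.2.1 x₀ x₁ y (hK.1 ⟨le_refl x₀, hy0⟩ hq0) (hK.1 ⟨le_refl x₁, hy1⟩ hq1)
        · rw [hf.2.1]; exact sup_le_sup h01 h11
  · rintro a b₀ b₁ (h0 | ⟨⟨x₀, y₀⟩, hq0, h01, h02⟩) h1
    · rcases h0 with h0 | h0
      · exact Or.inl (Or.inl h0)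
      · subst h0
        rcases h1 with (h1 | h1) | ⟨q, hq, h11, h12⟩
        · exact Or.inl (Or.inl h1)
        · have h1' : b₁ = ⊥ := h1
          exact Or.inl (Or.inr (by simp [h1']))
        · exact Or.inr ⟨q, hq, h11, by simpa using h12⟩
    · rcases h1 with (h1 | h1) | ⟨⟨x₁, y₁⟩, hq1, h11, h12⟩
      · exact Or.inl (Or.inl h1)
      · subst h1
        exact Or.inr ⟨(x₀, y₀), hq0, h01, by simpa using h02⟩
      · obtain ⟨x, hx0, hx1, hbx⟩ := hf.2.2 x₀ x₁ a h01 h11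
        refine Or.inr ⟨(x, y₀ ⊔ y₁), ?_, hbx, ?_⟩
        · exact hK.2.2.2.2 x y₀ y₁ (hK.1 ⟨hx0, le_refl y₀⟩ hq0) (hK.1 ⟨hx1, le_refl y₁⟩ hq1)
        · rw [hg.2.1]; exact sup_le_sup h02 h12

/-- The map `h` induced on bi-ideals by L-homomorphisms is a lattice homomorphism:
it preserves joins of bi-ideals and intersections of bi-ideals. -/
theorem hmap_latticeHom {A A' B B' : Type*} [SemilatticeSup A] [OrderBot A]
    [SemilatticeSup A'] [OrderBot A'] [SemilatticeSup B] [OrderBot B]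
    [SemilatticeSup B'] [OrderBot B'] (f : A → A') (g : B → B')
    (hf : IsLHom f) (hg : IsLHom g) (I J : Set (A × B))
    (hI : IsBiIdeal I) (hJ : IsBiIdeal J) :
    hmap f g (biSup I J) = biSup (hmap f g I) (hmap f g J) ∧
    hmap f g (I ∩ J) = hmap f g I ∩ hmap f g J := by
  constructor
  · apply Set.Subset.antisymm
    · -- h(biSup I J) ⊆ biGen (h I ∪ h J)
      set T := biSup (hmap f g I) (hmap f g J) with hTdef
      have hT : IsBiIdeal T := biGen_isBiIdeal _
      have hIT : hmap f g I ⊆ T :=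
        Set.subset_union_left.trans (subset_biGen _)
      have hJT : hmap f g J ⊆ T :=
        Set.subset_union_right.trans (subset_biGen _)
      -- the pullback bi-ideal
      set K : Set (A × B) := {q | (f q.1, g q.2) ∈ T} with hKdef
      have hK : IsBiIdeal K := by
        refine ⟨?_, ?_, ?_, ?_, ?_⟩
        · intro p q hqp hp
          exact hT.1 ⟨lhom_mono hf hqp.1, lhom_mono hg hqp.2⟩ hp
        · intro a
          show (f a, g ⊥) ∈ T
          rw [hg.1]; exact hT.2.1 (f a)
        · intro b
          show (f ⊥, g b) ∈ T
          rw [hf.1]; exact hT.2.2.1 (g b)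
        · intro a₀ a₁ b h0 h1
          show (f (a₀ ⊔ a₁), g b) ∈ T
          rw [hf.2.1]; exact hT.2.2.2.1 _ _ _ h0 h1
        · intro a b₀ b₁ h0 h1
          show (f a, g (b₀ ⊔ b₁)) ∈ T
          rw [hg.2.1]; exact hT.2.2.2.2 _ _ _ h0 h1
      have hIJK : biSup I J ⊆ K := by
        apply biGen_subset hK
        rintro q (hq | hq)
        · exact hIT (Or.inr ⟨q, hq, le_rfl, le_rfl⟩)
        · exact hJT (Or.inr ⟨q, hq, le_rfl, le_rfl⟩)
      rintro p (hp | ⟨q, hq, h1, h2⟩)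
      · rcases hp with hp | hp
        · exact hT.1 (show p ≤ ((⊥ : A'), p.2) from ⟨hp.le, le_rfl⟩) (hT.2.2.1 p.2)
        · exact hT.1 (show p ≤ (p.1, (⊥ : B')) from ⟨le_rfl, hp.le⟩) (hT.2.1 p.1)
      · exact hT.1 ⟨h1, h2⟩ (hIJK hq)
    · -- biGen (h I ∪ h J) ⊆ h (biSup I J)
      apply biGen_subset (hmap_isBiIdeal hf hg (biGen_isBiIdeal _))
      apply Set.union_subset
      · exact hmap_mono f g (Set.subset_union_left.trans (subset_biGen _))
      · exact hmap_mono f g (Set.subset_union_right.trans (subset_biGen _))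
  · ext p
    constructor
    · rintro (hp | ⟨q, ⟨hqI, hqJ⟩, h1, h2⟩)
      · exact ⟨Or.inl hp, Or.inl hp⟩
      · exact ⟨Or.inr ⟨q, hqI, h1, h2⟩, Or.inr ⟨q, hqJ, h1, h2⟩⟩
    · rintro ⟨hpI | ⟨⟨x₁, y₁⟩, hq1, h11, h12⟩, hpJ⟩
      · exact Or.inl hpI
      rcases hpJ with hpJ | ⟨⟨x₂, y₂⟩, hq2, h21, h22⟩
      · exact Or.inl hpJ
      obtain ⟨x, hx1, hx2, hpx⟩ := hf.2.2 x₁ x₂ p.1 h11 h21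
      obtain ⟨y, hy1, hy2, hpy⟩ := hg.2.2 y₁ y₂ p.2 h12 h22
      exact Or.inr ⟨(x, y), ⟨hI.1 ⟨hx1, hy1⟩ hq1, hJ.1 ⟨hx2, hy2⟩ hq2⟩, hpx, hpy⟩
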